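/- For generic parameters (a_1,...,a_n) ∈ ℂ^n (i.e., for all (a_1,...,a_n) in some nonempty Zariski-open subset of ℂ^n), the system a_k = e_k(w_1,...,w_n) + e_k(1/w_1,...,1/w_n), k = 1,...,n, has exactly 2·n! solutions (w_1,...,w_n) ∈ (ℂ*)^n. -/

import Mathlib

/-- The `k`-th elementary symmetric polynomial in `n` complex variables. -/
noncomputable def esymm (n k : ℕ) (g : Fin n → ℂ) : ℂ :=
  ∑ s ∈ Finset.powersetCard k (Finset.univ : Finset (Fin n)), ∏ i ∈ s, g i

namespace GC
open Finset Polynomial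

open Finset Polynomial

lemma esymm_eq_multiset (n k : ℕ) (g : Fin n → ℂ) :
    esymm n k g = (Finset.univ.val.map g).esymm k := by
  rw [esymm, Finset.esymm_map_val]

lemma esymm_zero (n : ℕ) (g : Fin n → ℂ) : esymm n 0 g = 1 := by
  simp [esymm]

lemma esymm_top (n : ℕ) (g : Fin n → ℂ) : esymm n n g = ∏ i, g i := by
  rw [esymm]
  have h : Finset.powersetCard n (Finset.univ : Finset (Fin n)) = {Finset.univ} := by
    have h2 := Finset.powersetCard_self (Finset.univ : Finset (Fin n))
    rwa [Finset.card_univ, Fintype.card_fin] at h2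
  rw [h]
  simp

lemma esymm_perm (n k : ℕ) (g : Fin n → ℂ) (σ : Equiv.Perm (Fin n)) :
    esymm n k (g ∘ σ) = esymm n k g := by
  rw [esymm_eq_multiset, esymm_eq_multiset]
  congr 1
  have : (Finset.univ.val : Multiset (Fin n)).map (g ∘ σ)
      = ((Finset.univ.val : Multiset (Fin n)).map σ).map g := by
    rw [Multiset.map_map]
  rw [this]
  congr 1
  calc (Finset.univ.val : Multiset (Fin n)).map σ
      = (Finset.univ.map σ.toEmbedding).val := rfl
    _ = (Finset.univ : Finset (Fin n)).val := by rw [Finset.map_univ_equiv]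

lemma esymm_inv (n k : ℕ) (hk : k ≤ n) (g : Fin n → ℂ) (hg : ∀ i, g i ≠ 0) :
    esymm n k (fun i => (g i)⁻¹) * ∏ i, g i = esymm n (n - k) g := by
  rw [esymm, esymm, Finset.sum_mul]
  apply Finset.sum_nbij' (fun s => Finset.univ \ s) (fun s => Finset.univ \ s)
  · intro s hs
    simp only [Finset.mem_powersetCard] at hs ⊢
    refine ⟨Finset.subset_univ _, ?_⟩
    rw [Finset.card_sdiff_of_subset (Finset.subset_univ _), Finset.card_univ, Fintype.card_fin, hs.2]
  · intro s hs
    simp only [Finset.mem_powersetCard] at hs ⊢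
    refine ⟨Finset.subset_univ _, ?_⟩
    rw [Finset.card_sdiff_of_subset (Finset.subset_univ _), Finset.card_univ, Fintype.card_fin, hs.2]
    omega
  · intro s hs
    exact Finset.sdiff_sdiff_eq_self (Finset.subset_univ s)
  · intro s hs
    exact Finset.sdiff_sdiff_eq_self (Finset.subset_univ s)
  · intro s hs
    have hsub : s ⊆ Finset.univ := Finset.subset_univ _
    rw [← Finset.prod_sdiff hsub]
    have : (∏ i ∈ s, (g i)⁻¹) * ((∏ i ∈ Finset.univ \ s, g i) * ∏ i ∈ s, g i)
        = (∏ i ∈ Finset.univ \ s, g i) * ((∏ i ∈ s, (g i)⁻¹) * ∏ i ∈ s, g i) := by ring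
    rw [this, ← Finset.prod_mul_distrib]
    have h1 : ∀ i ∈ s, (g i)⁻¹ * g i = 1 := fun i _ => inv_mul_cancel₀ (hg i)
    rw [Finset.prod_congr rfl h1, Finset.prod_const_one, mul_one]


open Finset Polynomial

/-- `∏ (X - w i)` as a multiset product. -/
lemma prodXsubC_eq (n : ℕ) (w : Fin n → ℂ) :
    ∏ i, (X - C (w i)) = ((Finset.univ.val.map w).map (fun t => X - C t)).prod := by
  rw [Multiset.map_map]
  rfl

lemma card_map_univ (n : ℕ) (w : Fin n → ℂ) :
    Multiset.card (Finset.univ.val.map w) = n := by simp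

lemma coeff_prodXsubC (n : ℕ) (w : Fin n → ℂ) {k : ℕ} (hk : k ≤ n) :
    (∏ i, (X - C (w i))).coeff k = (-1) ^ (n - k) * esymm n (n - k) w := by
  rw [prodXsubC_eq]
  have h := Multiset.prod_X_sub_C_coeff (Finset.univ.val.map w)
    (k := k) (by rw [card_map_univ]; exact hk)
  rw [card_map_univ] at h
  rw [h, esymm_eq_multiset]

lemma monic_prodXsubC (n : ℕ) (w : Fin n → ℂ) : (∏ i, (X - C (w i))).Monic :=
  monic_prod_of_monic _ _ fun i _ => monic_X_sub_C (w i)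

lemma natDegree_prodXsubC (n : ℕ) (w : Fin n → ℂ) :
    (∏ i, (X - C (w i))).natDegree = n := by
  rw [natDegree_prod _ _ (fun i _ => X_sub_C_ne_zero (w i))]
  simp

lemma roots_prodXsubC (n : ℕ) (w : Fin n → ℂ) :
    (∏ i, (X - C (w i))).roots = Finset.univ.val.map w := by
  rw [prodXsubC_eq]
  exact roots_multiset_prod_X_sub_C _

/-- equal elementary symmetric values in degrees 1..n imply equal products -/
lemma prod_eq_of_esymm_eq (n : ℕ) (w r : Fin n → ℂ)
    (h : ∀ k : Fin n, esymm n (k.1 + 1) w = esymm n (k.1 + 1) r) :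
    ∏ i, (X - C (w i)) = ∏ i, (X - C (r i)) := by
  ext k
  rcases le_or_gt k n with hk | hk
  · rw [coeff_prodXsubC n w hk, coeff_prodXsubC n r hk]
    rcases Nat.eq_zero_or_pos (n - k) with h0 | hpos
    · rw [h0]; simp [esymm_zero]
    · have hlt : n - k - 1 < n := by omega
      have := h ⟨n - k - 1, hlt⟩
      simp only at this
      have he : n - k - 1 + 1 = n - k := by omega
      rw [he] at this
      rw [this]
  · rw [coeff_eq_zero_of_natDegree_lt (by rw [natDegree_prodXsubC]; exact hk),
        coeff_eq_zero_of_natDegree_lt (by rw [natDegree_prodXsubC]; exact hk)]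


open Finset Polynomial

/-- The Vandermonde-type symmetric polynomial `∏_{i ≠ j} (X i - X j)`. -/
noncomputable def Vd (n : ℕ) : MvPolynomial (Fin n) ℂ :=
  ∏ p ∈ Finset.univ.offDiag, (MvPolynomial.X p.1 - MvPolynomial.X p.2)

lemma Vd_symmetric (n : ℕ) : (Vd n).IsSymmetric := by
  intro σ
  rw [Vd, map_prod]
  simp only [map_sub, MvPolynomial.rename_X]
  apply Finset.prod_nbij' (fun p => (σ p.1, σ p.2)) (fun p => (σ⁻¹ p.1, σ⁻¹ p.2))
  · intro p hp
    simp only [Finset.mem_offDiag] at hp ⊢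
    exact ⟨Finset.mem_univ _, Finset.mem_univ _, fun h => hp.2.2 (σ.injective h)⟩
  · intro p hp
    simp only [Finset.mem_offDiag] at hp ⊢
    exact ⟨Finset.mem_univ _, Finset.mem_univ _, fun h => hp.2.2 (σ⁻¹.injective h)⟩
  · intro p hp; simp
  · intro p hp; simp
  · intro p hp; rfl

/-- A polynomial expressing `Vd` in the elementary symmetric polynomials
(fundamental theorem of symmetric polynomials). -/
noncomputable def Fp (n : ℕ) : MvPolynomial (Fin n) ℂ :=
  (MvPolynomial.esymmAlgHom_surjective (σ := Fin n) (R := ℂ)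
    (le_of_eq (Fintype.card_fin n)) ⟨Vd n, Vd_symmetric n⟩).choose

lemma Fp_spec (n : ℕ) :
    MvPolynomial.aeval (fun i : Fin n => MvPolynomial.esymm (Fin n) ℂ (i.1 + 1)) (Fp n)
      = Vd n := by
  have h := (MvPolynomial.esymmAlgHom_surjective (σ := Fin n) (R := ℂ)
    (le_of_eq (Fintype.card_fin n)) ⟨Vd n, Vd_symmetric n⟩).choose_spec
  have := congrArg Subtype.val h
  rwa [MvPolynomial.esymmAlgHom_apply] at this

lemma eval_Fp (n : ℕ) (r : Fin n → ℂ) :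
    MvPolynomial.eval (fun k : Fin n => esymm n (k.1 + 1) r) (Fp n)
      = ∏ p ∈ Finset.univ.offDiag, (r p.1 - r p.2) := by
  have h := congrArg (MvPolynomial.aeval r) (Fp_spec n)
  rw [MvPolynomial.comp_aeval_apply] at h
  have h2 : ∀ i : Fin n, MvPolynomial.aeval r (MvPolynomial.esymm (Fin n) ℂ (i.1 + 1))
      = esymm n (i.1 + 1) r := by
    intro i
    rw [MvPolynomial.aeval_esymm_eq_multiset_esymm, esymm_eq_multiset]
  calc MvPolynomial.eval (fun k : Fin n => esymm n (k.1 + 1) r) (Fp n)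
      = MvPolynomial.aeval (R := ℂ) (fun k : Fin n => esymm n (k.1 + 1) r) (Fp n) := by
        rw [← MvPolynomial.coe_aeval_eq_eval]
        rfl
    _ = ∏ p ∈ Finset.univ.offDiag, (r p.1 - r p.2) := by
        simp_rw [← h2]
        rw [h, Vd, map_prod]
        simp

lemma eval_Fp_ne_zero (n : ℕ) (r : Fin n → ℂ) (hr : Function.Injective r) :
    MvPolynomial.eval (fun k : Fin n => esymm n (k.1 + 1) r) (Fp n) ≠ 0 := by
  rw [eval_Fp]
  apply Finset.prod_ne_zero_iff.mpr
  intro p hp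
  rw [Finset.mem_offDiag] at hp
  exact sub_ne_zero_of_ne fun h => hp.2.2 (hr h)

lemma injective_of_eval_Fp_ne_zero (n : ℕ) (r : Fin n → ℂ)
    (h : MvPolynomial.eval (fun k : Fin n => esymm n (k.1 + 1) r) (Fp n) ≠ 0) :
    Function.Injective r := by
  intro i j hij
  by_contra hne
  apply h
  rw [eval_Fp]
  exact Finset.prod_eq_zero (i := (i, j))
    (Finset.mem_offDiag.mpr ⟨Finset.mem_univ _, Finset.mem_univ _, hne⟩)
    (by simp [hij])


open Finset Polynomial

-- [assume previous lemmas, use axioms as placeholders for speed]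
/-- The monic polynomial with prescribed signed coefficients. -/
noncomputable def Pc (n : ℕ) (c : Fin n → ℂ) : Polynomial ℂ :=
  X ^ n + ∑ k : Fin n, C ((-1 : ℂ) ^ (k.1 + 1) * c k) * X ^ (n - (k.1 + 1))

lemma degree_sum_lt (n : ℕ) (hn : 0 < n) (c : Fin n → ℂ) :
    (∑ k : Fin n, C ((-1 : ℂ) ^ (k.1 + 1) * c k) * X ^ (n - (k.1 + 1))).degree
      < (n : WithBot ℕ) := by
  apply lt_of_le_of_lt (degree_sum_le _ _)
  rw [Finset.sup_lt_iff (by exact_mod_cast WithBot.bot_lt_coe n)]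
  intro k _
  apply lt_of_le_of_lt (degree_C_mul_X_pow_le _ _)
  exact_mod_cast Nat.sub_lt hn (Nat.succ_pos _)

lemma monic_Pc (n : ℕ) (hn : 0 < n) (c : Fin n → ℂ) : (Pc n c).Monic := by
  rw [Pc]
  exact monic_X_pow_add (degree_sum_lt n hn c)

lemma natDegree_Pc (n : ℕ) (hn : 0 < n) (c : Fin n → ℂ) : (Pc n c).natDegree = n := by
  have hd : (Pc n c).degree = n := by
    rw [Pc, degree_add_eq_left_of_degree_lt, degree_X_pow]
    rw [degree_X_pow]
    exact degree_sum_lt n hn c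
  exact natDegree_eq_of_degree_eq_some hd

lemma coeff_Pc (n : ℕ) (c : Fin n → ℂ) (j : Fin n) :
    (Pc n c).coeff (n - (j.1 + 1)) = (-1 : ℂ) ^ (j.1 + 1) * c j := by
  rw [Pc, coeff_add, coeff_X_pow]
  have h1 : ¬ (n - (j.1 + 1) = n) := by omega
  rw [if_neg h1, zero_add, finset_sum_coeff]
  rw [Finset.sum_eq_single j]
  · rw [coeff_C_mul, coeff_X_pow, if_pos rfl, mul_one]
  · intro k _ hkj
    rw [coeff_C_mul, coeff_X_pow, if_neg, mul_zero]
    intro h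
    apply hkj
    have : k.1 = j.1 := by omega
    exact Fin.ext this
  · intro h; exact absurd (Finset.mem_univ j) h


lemma exists_root_tuple (n : ℕ) (hn : 0 < n) (c : Fin n → ℂ) :
    ∃ r : Fin n → ℂ, ∏ i, (X - C (r i)) = Pc n c := by
  have hmonic := monic_Pc n hn c
  have hsplits : (Pc n c).Splits := IsAlgClosed.splits _
  have hcard : Multiset.card (Pc n c).roots = n := by
    rw [(splits_iff_card_roots).mp hsplits, natDegree_Pc n hn c]
  set l := (Pc n c).roots.toList with hl
  have hlen : l.length = n := by rw [hl, Multiset.length_toList, hcard]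
  refine ⟨fun i => l.get (Fin.cast hlen.symm i), ?_⟩
  have h1 : ∏ i : Fin n, (X - C (l.get (Fin.cast hlen.symm i)))
      = ∏ i : Fin l.length, (X - C (l.get i)) := by
    apply Fintype.prod_equiv (finCongr hlen.symm)
    intro i; rfl
  rw [h1]
  have h2 : ∏ i : Fin l.length, (X - C (l.get i))
      = (l.map (fun t => X - C t)).prod := by
    rw [← List.prod_ofFn]
    congr 1
    rw [← List.ofFn_get l, List.map_ofFn, List.ofFn_get]
    rfl
  rw [h2]
  have h3 : ((l.map (fun t => X - C t) : List (Polynomial ℂ)) : Multiset (Polynomial ℂ)).prod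
      = ((Pc n c).roots.map (fun t => X - C t)).prod := by
    congr 1
    rw [← Multiset.map_coe, hl, Multiset.coe_toList]
  have h4 : (List.map (fun t => X - C t) l).prod
      = (Multiset.map (fun t => X - C t) (Pc n c).roots).prod := by
    rw [← Multiset.prod_coe, ← Multiset.map_coe, hl, Multiset.coe_toList]
  rw [h4]
  exact (prod_multiset_X_sub_C_of_monic_of_roots_card_eq hmonic (by rw [hcard, natDegree_Pc n hn c]))

lemma esymm_root_tuple (n : ℕ) (hn : 0 < n) (c : Fin n → ℂ) (r : Fin n → ℂ)
    (hr : ∏ i, (X - C (r i)) = Pc n c) (k : Fin n) :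
    esymm n (k.1 + 1) r = c k := by
  have h1 := coeff_prodXsubC n r (k := n - (k.1 + 1)) (by omega)
  have h2 : n - (n - (k.1 + 1)) = k.1 + 1 := by omega
  rw [h2, hr, coeff_Pc] at h1
  have hne : ((-1 : ℂ) ^ (k.1 + 1)) ≠ 0 := by
    apply pow_ne_zero; norm_num
  exact (mul_left_cancel₀ hne h1).symm

/-- Main fiber description -/
lemma fiber_eq (n : ℕ) (hn : 0 < n) (c : Fin n → ℂ)
    (hF : ∃ r : Fin n → ℂ, Function.Injective r ∧ ∀ k : Fin n, esymm n (k.1 + 1) r = c k) :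
    ∃ r : Fin n → ℂ, Function.Injective r ∧
      {w : Fin n → ℂ | ∀ k : Fin n, esymm n (k.1 + 1) w = c k}
        = Set.range (fun σ : Equiv.Perm (Fin n) => r ∘ σ) := by
  obtain ⟨r, hr, hrc⟩ := hF
  refine ⟨r, hr, ?_⟩
  ext w
  simp only [Set.mem_setOf_eq, Set.mem_range]
  constructor
  · intro hw
    have heq : ∀ k : Fin n, esymm n (k.1 + 1) w = esymm n (k.1 + 1) r :=
      fun k => (hw k).trans (hrc k).symm
    have hprod := prod_eq_of_esymm_eq n w r heq
    have hroots : Finset.univ.val.map w = Finset.univ.val.map r := by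
      rw [← roots_prodXsubC n w, ← roots_prodXsubC n r, hprod]
    -- w is injective
    have hnodr : (Finset.univ.val.map r).Nodup := Finset.univ.nodup.map hr
    have hnodw : (Finset.univ.val.map w).Nodup := hroots ▸ hnodr
    have hw_inj : Function.Injective w := by
      intro i j hij
      exact Multiset.inj_on_of_nodup_map hnodw i (Finset.mem_univ i) j (Finset.mem_univ j) hij
    have hrange : Set.range w = Set.range r := by
      ext x
      constructor
      · rintro ⟨i, rfl⟩
        have : w i ∈ Finset.univ.val.map r := by
          rw [← hroots]; exact Multiset.mem_map_of_mem w (Finset.mem_univ i)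
        obtain ⟨j, _, hj⟩ := Multiset.mem_map.mp this
        exact ⟨j, hj⟩
      · rintro ⟨i, rfl⟩
        have : r i ∈ Finset.univ.val.map w := by
          rw [hroots]; exact Multiset.mem_map_of_mem r (Finset.mem_univ i)
        obtain ⟨j, _, hj⟩ := Multiset.mem_map.mp this
        exact ⟨j, hj⟩
    refine ⟨(Equiv.ofInjective w hw_inj).trans
      ((Equiv.setCongr hrange).trans (Equiv.ofInjective r hr).symm), ?_⟩
    funext i
    show r _ = w i
    rw [Equiv.trans_apply, Equiv.trans_apply]
    rw [Equiv.apply_ofInjective_symm hr]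
    rfl
  · rintro ⟨σ, rfl⟩
    intro k
    rw [show r ∘ σ = r ∘ σ from rfl, esymm_perm n (k.1+1) r σ]
    exact hrc k

lemma ncard_fiber (n : ℕ) (r : Fin n → ℂ) (hr : Function.Injective r) :
    (Set.range (fun σ : Equiv.Perm (Fin n) => r ∘ σ)).ncard = Nat.factorial n := by
  have hinj : Function.Injective (fun σ : Equiv.Perm (Fin n) => r ∘ σ) := by
    intro σ τ h
    apply Equiv.ext
    intro i
    exact hr (congrFun h i)
  rw [← Set.image_univ, Set.ncard_image_of_injective _ hinj, Set.ncard_univ,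
    Nat.card_eq_fintype_card, Fintype.card_perm, Fintype.card_fin]


open Finset Polynomial

/-- `a` indexed by degree `d ∈ {1,...,n}`. -/
noncomputable def aIdx (n : ℕ) (a : Fin n → ℂ) (d : ℕ) : ℂ :=
  if h : d - 1 < n then a ⟨d - 1, h⟩ else 0

lemma aIdx_fin (n : ℕ) (a : Fin n → ℂ) (k : Fin n) : aIdx n a (k.1 + 1) = a k := by
  simp [aIdx]

/-- candidate symmetric function values for branch `t` -/
noncomputable def cC (n : ℕ) (a : Fin n → ℂ) (t : ℂ) (k : Fin n) : ℂ :=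
  if k.1 + 1 = n then t
  else t * (t * aIdx n a (k.1 + 1) - aIdx n a (n - (k.1 + 1))) / (t ^ 2 - 1)

lemma key_solve (n : ℕ) (a : Fin n → ℂ) (w : Fin n → ℂ) (hw : ∀ i, w i ≠ 0)
    (hsys : ∀ k : Fin n, a k = esymm n (k.1 + 1) w + esymm n (k.1 + 1) (fun i => (w i)⁻¹))
    (ht2 : (esymm n n w) ^ 2 ≠ 1) :
    ∀ k : Fin n, esymm n (k.1 + 1) w = cC n a (esymm n n w) k := by
  intro k
  set E := esymm n n w with hE
  have hprod : ∏ i, w i = E := (esymm_top n w).symm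
  have hE0 : E ≠ 0 := by rw [← hprod]; exact Finset.prod_ne_zero_iff.mpr fun i _ => hw i
  have hE2 : E ^ 2 - 1 ≠ 0 := sub_ne_zero_of_ne ht2
  by_cases hk : k.1 + 1 = n
  · rw [cC, if_pos hk, hk]
  · have hklt : k.1 + 1 < n := lt_of_le_of_ne k.2 hk
    set k' : Fin n := ⟨n - (k.1 + 1) - 1, by omega⟩ with hk'
    have hk'1 : k'.1 + 1 = n - (k.1 + 1) := by
      have : k'.1 = n - (k.1 + 1) - 1 := rfl
      omega
    set x := esymm n (k.1 + 1) w with hx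
    set y := esymm n (n - (k.1 + 1)) w with hy
    have hinv1 : esymm n (k.1 + 1) (fun i => (w i)⁻¹) = y / E := by
      rw [eq_div_iff hE0, ← hprod]
      exact esymm_inv n (k.1 + 1) (by omega) w hw
    have hinv2 : esymm n (k'.1 + 1) (fun i => (w i)⁻¹) = x / E := by
      rw [eq_div_iff hE0, ← hprod, hk'1]
      have := esymm_inv n (n - (k.1 + 1)) (by omega) w hw
      rwa [show n - (n - (k.1 + 1)) = k.1 + 1 by omega] at this
    have eq1 : a k = x + y / E := by rw [hsys k, hinv1, ← hx]
    have eq2 : a k' = y + x / E := by rw [hsys k', hinv2, hk'1, ← hy]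
    rw [cC, if_neg hk, aIdx_fin]
    have haIdx2 : aIdx n a (n - (k.1 + 1)) = a k' := by
      rw [← hk'1, aIdx_fin]
    rw [haIdx2, eq1, eq2]
    field_simp
    ring

lemma key_back (n : ℕ) (hn : 0 < n) (a : Fin n → ℂ) (t : ℂ)
    (hroot : t ^ 2 - aIdx n a n * t + 1 = 0) (ht2 : t ^ 2 ≠ 1) (w : Fin n → ℂ)
    (hw : ∀ k : Fin n, esymm n (k.1 + 1) w = cC n a t k) :
    (∀ i, w i ≠ 0) ∧
      ∀ k : Fin n, a k = esymm n (k.1 + 1) w + esymm n (k.1 + 1) (fun i => (w i)⁻¹) := by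
  have ht0 : t ≠ 0 := by
    intro h; rw [h] at hroot; norm_num at hroot
  have ht2' : t ^ 2 - 1 ≠ 0 := sub_ne_zero_of_ne ht2
  have hE : esymm n n w = t := by
    have h := hw ⟨n - 1, by omega⟩
    have hcond : (⟨n - 1, by omega⟩ : Fin n).1 + 1 = n := by
      have : (⟨n - 1, by omega⟩ : Fin n).1 = n - 1 := rfl
      omega
    rw [cC, if_pos hcond, hcond] at h
    exact h
  have hprod : ∏ i, w i = t := by rw [← esymm_top n w, hE]
  have hwne : ∀ i, w i ≠ 0 := by
    intro i hi
    exact ht0 (by rw [← hprod]; exact Finset.prod_eq_zero (Finset.mem_univ i) hi)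
  refine ⟨hwne, ?_⟩
  intro k
  by_cases hk : k.1 + 1 = n
  · have hinv : esymm n (k.1 + 1) (fun i => (w i)⁻¹) = 1 / t := by
      rw [eq_div_iff ht0, ← hprod]
      have h2 := esymm_inv n (k.1 + 1) (le_of_eq hk) w hwne
      rwa [show n - (k.1 + 1) = 0 by omega, esymm_zero] at h2
    have hx : esymm n (k.1 + 1) w = t := by rw [hk, hE]
    have hak : aIdx n a n = a k := by
      have h1 : n - 1 < n := by omega
      have hkk : k = ⟨n - 1, h1⟩ := Fin.ext (show k.1 = n - 1 by omega)
      rw [aIdx, dif_pos h1, hkk]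
    rw [hx, hinv, ← hak]
    have h2 : aIdx n a n * t = t ^ 2 + 1 := by linear_combination -hroot
    field_simp
    linear_combination h2
  · have hklt : k.1 + 1 < n := lt_of_le_of_ne k.2 hk
    set k' : Fin n := ⟨n - (k.1 + 1) - 1, by omega⟩ with hk'def
    have hk'1 : k'.1 + 1 = n - (k.1 + 1) := by
      have : k'.1 = n - (k.1 + 1) - 1 := rfl
      omega
    have hk'ne : ¬ (k'.1 + 1 = n) := by omega
    have haIdx2 : aIdx n a (n - (k.1 + 1)) = a k' := by rw [← hk'1, aIdx_fin]
    have haIdx3 : aIdx n a (n - (k'.1 + 1)) = a k := by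
      rw [show n - (k'.1 + 1) = k.1 + 1 by omega, aIdx_fin]
    have hx : esymm n (k.1 + 1) w = t * (t * a k - a k') / (t ^ 2 - 1) := by
      rw [hw k, cC, if_neg hk, aIdx_fin, haIdx2]
    have hy : esymm n (n - (k.1 + 1)) w = t * (t * a k' - a k) / (t ^ 2 - 1) := by
      rw [← hk'1, hw k', cC, if_neg hk'ne, aIdx_fin, haIdx3]
    have hinv : esymm n (k.1 + 1) (fun i => (w i)⁻¹)
        = esymm n (n - (k.1 + 1)) w / t := by
      rw [eq_div_iff ht0, ← hprod]
      exact esymm_inv n (k.1 + 1) (by omega) w hwne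
    rw [hinv, hx, hy]
    field_simp
    ring


open Finset Polynomial

/-- Formal version of `aIdx`. -/
noncomputable def AIdx (n : ℕ) (d : ℕ) : MvPolynomial (Fin n) ℂ :=
  if h : d - 1 < n then MvPolynomial.X ⟨d - 1, h⟩ else 0

lemma eval_AIdx (n : ℕ) (a : Fin n → ℂ) (d : ℕ) :
    MvPolynomial.eval a (AIdx n d) = aIdx n a d := by
  rw [AIdx, aIdx]
  split
  · rw [MvPolynomial.eval_X]
  · rw [map_zero]

/-- numerator of `cC` as a polynomial in `T` over `MvPolynomial`. -/
noncomputable def chat (n : ℕ) (k : Fin n) : Polynomial (MvPolynomial (Fin n) ℂ) :=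
  if k.1 + 1 = n then X * (X ^ 2 - 1)
  else X * (X * C (AIdx n (k.1 + 1)) - C (AIdx n (n - (k.1 + 1))))

lemma chat_eval (n : ℕ) (a : Fin n → ℂ) (t : ℂ) (ht : t ^ 2 - 1 ≠ 0) (k : Fin n) :
    eval₂ (MvPolynomial.eval a) t (chat n k) = (t ^ 2 - 1) * cC n a t k := by
  rw [chat, cC]
  split
  · simp only [eval₂_mul, eval₂_X, eval₂_sub, eval₂_pow, eval₂_one]
    ring
  · simp only [eval₂_mul, eval₂_X, eval₂_sub, eval₂_pow, eval₂_one, eval₂_C, eval_AIdx]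
    field_simp

noncomputable def Gpoly (n : ℕ) : Polynomial (MvPolynomial (Fin n) ℂ) :=
  ∑ m ∈ (Fp n).support,
    C (MvPolynomial.C (MvPolynomial.coeff m (Fp n)))
      * (X ^ 2 - 1) ^ ((Fp n).totalDegree - m.sum fun _ e => e)
      * ∏ k, (chat n k) ^ (m k)

lemma Gpoly_eval (n : ℕ) (a : Fin n → ℂ) (t : ℂ) (ht : t ^ 2 - 1 ≠ 0) :
    eval₂ (MvPolynomial.eval a) t (Gpoly n)
      = (t ^ 2 - 1) ^ (Fp n).totalDegree * MvPolynomial.eval (cC n a t) (Fp n) := by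
  rw [Gpoly]
  rw [eval₂_finset_sum]
  rw [MvPolynomial.eval_eq', Finset.mul_sum]
  apply Finset.sum_congr rfl
  intro m hm
  have hms : (m.sum fun _ e => e) ≤ (Fp n).totalDegree := MvPolynomial.le_totalDegree hm
  rw [eval₂_mul, eval₂_mul, eval₂_C, eval₂_pow, eval₂_sub, eval₂_pow, eval₂_one, eval₂_X]
  rw [eval₂_finset_prod]
  simp_rw [eval₂_pow, chat_eval n a t ht, mul_pow]
  rw [Finset.prod_mul_distrib, Finset.prod_pow_eq_pow_sum]
  have hsum : ∑ k, m k = m.sum fun _ e => e := by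
    rw [Finsupp.sum_fintype]
    intro i; rfl
  rw [MvPolynomial.eval_C, hsum]
  have hp : (t ^ 2 - 1) ^ ((Fp n).totalDegree - m.sum fun _ e => e)
      * (t ^ 2 - 1) ^ (m.sum fun _ e => e) = (t ^ 2 - 1) ^ (Fp n).totalDegree :=
    pow_sub_mul_pow _ hms
  rw [← hp]
  ring

/-- The quadratic `T^2 - a_n T + 1` over `MvPolynomial`. -/
noncomputable def Mq (n : ℕ) : Polynomial (MvPolynomial (Fin n) ℂ) :=
  X ^ 2 - C (AIdx n n) * X + 1

lemma Mq_eq (n : ℕ) : Mq n = X ^ 2 + (1 - C (AIdx n n) * X) := by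
  rw [Mq]; ring

lemma degree_lin_lt (n : ℕ) :
    (1 - C (AIdx n n) * X : Polynomial (MvPolynomial (Fin n) ℂ)).degree < 2 := by
  apply lt_of_le_of_lt (degree_sub_le _ _)
  rw [max_lt_iff]
  constructor
  · exact lt_of_le_of_lt degree_one_le (by norm_num)
  · apply lt_of_le_of_lt (degree_mul_le _ _)
    calc (C (AIdx n n)).degree + (X : Polynomial (MvPolynomial (Fin n) ℂ)).degree
        ≤ 0 + 1 := add_le_add degree_C_le degree_X_le
      _ < 2 := by norm_num

lemma monic_Mq (n : ℕ) : (Mq n).Monic := by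
  rw [Mq_eq]
  exact monic_X_pow_add (degree_lin_lt n)

noncomputable def alphaP (n : ℕ) : MvPolynomial (Fin n) ℂ := (Gpoly n %ₘ Mq n).coeff 0
noncomputable def betaP (n : ℕ) : MvPolynomial (Fin n) ℂ := (Gpoly n %ₘ Mq n).coeff 1

/-- The generic-condition polynomial. -/
noncomputable def pGen (n : ℕ) : MvPolynomial (Fin n) ℂ :=
  (AIdx n n ^ 2 - 4) *
    (alphaP n ^ 2 + AIdx n n * alphaP n * betaP n + betaP n ^ 2)

lemma degree_le_one_of_lt_two (p : Polynomial ℂ) (h : p.degree < 2) : p.degree ≤ 1 := by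
  rcases eq_or_ne p 0 with rfl | hp
  · simp
  · rw [degree_eq_natDegree hp] at h ⊢
    exact_mod_cast Nat.lt_succ_iff.mp (by exact_mod_cast h)

lemma norm_eval (n : ℕ) (a : Fin n → ℂ) (u v : ℂ)
    (huv : u + v = aIdx n a n) (hprod : u * v = 1) :
    MvPolynomial.eval a
        (alphaP n ^ 2 + AIdx n n * alphaP n * betaP n + betaP n ^ 2)
      = eval₂ (MvPolynomial.eval a) u (Gpoly n)
          * eval₂ (MvPolynomial.eval a) v (Gpoly n) := by
  set φ := (MvPolynomial.eval a : MvPolynomial (Fin n) ℂ →+* ℂ) with hφ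
  set Gm := (Gpoly n).map φ with hGm
  set Mm := (Mq n).map φ with hMm
  have hMmonic : Mm.Monic := (monic_Mq n).map φ
  have hMm_eq : Mm = X ^ 2 - C (aIdx n a n) * X + 1 := by
    rw [hMm, Mq]
    simp only [Polynomial.map_add, Polynomial.map_sub, Polynomial.map_pow,
      Polynomial.map_mul, Polynomial.map_one, Polynomial.map_X, Polynomial.map_C]
    rw [eval_AIdx]
  have hroot : ∀ z : ℂ, z = u ∨ z = v → Mm.eval z = 0 := by
    intro z hz
    rw [hMm_eq]
    simp only [eval_add, eval_sub, eval_pow, eval_mul, eval_C, eval_X, eval_one]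
    rcases hz with rfl | rfl
    · linear_combination z * huv - hprod
    · linear_combination z * huv - hprod
  have hmodeq : ∀ z : ℂ, Mm.eval z = 0 → Gm.eval z = (Gm %ₘ Mm).eval z := by
    intro z hz
    conv_lhs => rw [← modByMonic_add_div Gm Mm]
    rw [eval_add, eval_mul, hz, zero_mul, add_zero]
  have hmap_mod : Gm %ₘ Mm = ((Gpoly n) %ₘ (Mq n)).map φ := by
    rw [hGm, hMm]
    exact (map_modByMonic φ (monic_Mq n)).symm
  have hdeg : ((Gpoly n %ₘ Mq n).map φ).degree ≤ 1 := by
    apply degree_le_one_of_lt_two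
    apply lt_of_le_of_lt (degree_map_le)
    have h2 : (Mq n).degree = 2 := by
      rw [Mq_eq, degree_add_eq_left_of_degree_lt
        (by rw [degree_X_pow]; exact degree_lin_lt n), degree_X_pow]
      norm_num
    have := degree_modByMonic_lt (Gpoly n) (monic_Mq n)
    rwa [h2] at this
  have hform : ((Gpoly n %ₘ Mq n).map φ)
      = C (φ (betaP n)) * X + C (φ (alphaP n)) := by
    have := eq_X_add_C_of_degree_le_one hdeg
    rwa [coeff_map, coeff_map] at this
  have heval : ∀ z : ℂ, z = u ∨ z = v →
      eval₂ φ z (Gpoly n) = φ (alphaP n) + φ (betaP n) * z := by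
    intro z hz
    rw [eval₂_eq_eval_map, ← hGm, hmodeq z (hroot z hz), hmap_mod, hform]
    simp only [eval_add, eval_mul, eval_C, eval_X]
    ring
  rw [heval u (Or.inl rfl), heval v (Or.inr rfl)]
  simp only [map_add, map_mul, map_pow, hφ]
  rw [eval_AIdx]
  set x := φ (alphaP n)
  set y := φ (betaP n)
  rw [← huv]
  linear_combination (-y ^ 2) * hprod

lemma eval_pGen (n : ℕ) (a : Fin n → ℂ) :
    MvPolynomial.eval a (pGen n)
      = (aIdx n a n ^ 2 - 4) *
        MvPolynomial.eval a
          (alphaP n ^ 2 + AIdx n n * alphaP n * betaP n + betaP n ^ 2) := by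
  rw [pGen, map_mul, map_sub, map_pow, eval_AIdx]
  norm_num


/-! ### Witness: `pGen n` is nonzero -/

lemma factorial_prod (n : ℕ) : ∏ i : Fin n, (i.1 + 2) = (n + 1).factorial := by
  induction n with
  | zero => simp
  | succ m ih =>
    rw [Fin.prod_univ_castSucc]
    simp only [Fin.coe_castSucc, Fin.val_last]
    have hfs : (m + 1 + 1).factorial = (m + 1 + 1) * (m + 1).factorial := Nat.factorial_succ _
    rw [hfs, ih]
    ring

lemma pGen_ne_zero (n : ℕ) (hn : 0 < n) : pGen n ≠ 0 := by
  set w0 : Fin n → ℂ := fun i => (i.1 : ℂ) + 2 with hw0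
  have hw0ne : ∀ i, w0 i ≠ 0 := by
    intro i h
    have h2 : ((i.1 + 2 : ℕ) : ℂ) = 0 := by push_cast; rw [hw0] at h; exact h
    have := Nat.cast_eq_zero.mp h2
    omega
  have hw0inj : Function.Injective w0 := by
    intro i j h
    rw [hw0] at h
    simp only [add_left_inj] at h
    exact Fin.ext (Nat.cast_injective h)
  set E : ℂ := ∏ i, w0 i with hE
  have hEnat : E = ((n + 1).factorial : ℂ) := by
    rw [hE, ← factorial_prod n]
    push_cast
    rfl
  have hfac2 : 2 ≤ (n + 1).factorial := by
    calc 2 = (2 : ℕ).factorial := rfl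
    _ ≤ (n + 1).factorial := Nat.factorial_le (by omega)
  have hE0 : E ≠ 0 := by
    rw [hEnat]
    exact Nat.cast_ne_zero.mpr (Nat.factorial_ne_zero _)
  have hE2 : E ^ 2 ≠ 1 := by
    rw [hEnat]
    intro h
    have h3 : (n + 1).factorial ^ 2 = 1 := by exact_mod_cast h
    nlinarith [hfac2]
  have hE2inv : (E⁻¹) ^ 2 ≠ 1 := by
    rw [inv_pow]
    intro h
    exact hE2 (by rw [← inv_inv (E ^ 2), h, inv_one])
  -- the parameter vector
  set a0 : Fin n → ℂ :=
    fun k => esymm n (k.1 + 1) w0 + esymm n (k.1 + 1) (fun i => (w0 i)⁻¹) with ha0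
  have hsys0 : ∀ k : Fin n, a0 k
      = esymm n (k.1 + 1) w0 + esymm n (k.1 + 1) (fun i => (w0 i)⁻¹) := fun k => rfl
  set w1 : Fin n → ℂ := fun i => (w0 i)⁻¹ with hw1
  have hw1ne : ∀ i, w1 i ≠ 0 := fun i => inv_ne_zero (hw0ne i)
  have hw1inj : Function.Injective w1 := by
    intro i j h
    exact hw0inj (inv_inj.mp h)
  have hsys1 : ∀ k : Fin n, a0 k
      = esymm n (k.1 + 1) w1 + esymm n (k.1 + 1) (fun i => (w1 i)⁻¹) := by
    intro k
    have : (fun i => (w1 i)⁻¹) = w0 := by funext i; rw [hw1]; exact inv_inv _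
    rw [this, hsys0 k, add_comm]
  have hEw0 : esymm n n w0 = E := esymm_top n w0
  have hEw1 : esymm n n w1 = E⁻¹ := by
    rw [esymm_top, hw1, hE]
    exact Finset.prod_inv_distrib (f := w0)
  have han : aIdx n a0 n = E + E⁻¹ := by
    have h1 : n - 1 < n := by omega
    rw [aIdx, dif_pos h1]
    have hcond : (⟨n - 1, h1⟩ : Fin n).1 + 1 = n := by
      have : (⟨n - 1, h1⟩ : Fin n).1 = n - 1 := rfl
      omega
    rw [ha0]
    simp only
    rw [hcond, hEw0]
    congr 1
  -- key_solve applications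
  have hcc0 : ∀ k, esymm n (k.1 + 1) w0 = cC n a0 E k := by
    have := key_solve n a0 w0 hw0ne hsys0 (by rw [hEw0]; exact hE2)
    rwa [hEw0] at this
  have hcc1 : ∀ k, esymm n (k.1 + 1) w1 = cC n a0 E⁻¹ k := by
    have := key_solve n a0 w1 hw1ne hsys1 (by rw [hEw1]; exact hE2inv)
    rwa [hEw1] at this
  have hF0 : MvPolynomial.eval (cC n a0 E) (Fp n) ≠ 0 := by
    have : cC n a0 E = fun k : Fin n => esymm n (k.1 + 1) w0 := by
      funext k; rw [hcc0 k]
    rw [this]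
    exact eval_Fp_ne_zero n w0 hw0inj
  have hF1 : MvPolynomial.eval (cC n a0 E⁻¹) (Fp n) ≠ 0 := by
    have : cC n a0 E⁻¹ = fun k : Fin n => esymm n (k.1 + 1) w1 := by
      funext k; rw [hcc1 k]
    rw [this]
    exact eval_Fp_ne_zero n w1 hw1inj
  have ht0 : E ^ 2 - 1 ≠ 0 := sub_ne_zero_of_ne hE2
  have ht1 : (E⁻¹) ^ 2 - 1 ≠ 0 := sub_ne_zero_of_ne hE2inv
  -- evaluate pGen
  intro hzero
  have heval : MvPolynomial.eval a0 (pGen n) = 0 := by rw [hzero]; simp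
  rw [eval_pGen] at heval
  rw [norm_eval n a0 E E⁻¹ han.symm (mul_inv_cancel₀ hE0)] at heval
  rw [Gpoly_eval n a0 E ht0, Gpoly_eval n a0 E⁻¹ ht1] at heval
  have h4 : aIdx n a0 n ^ 2 - 4 ≠ 0 := by
    rw [han]
    have : (E + E⁻¹) ^ 2 - 4 = (E - E⁻¹) ^ 2 := by
      field_simp
      ring
    rw [this]
    apply pow_ne_zero
    intro h
    apply hE2
    have := sub_eq_zero.mp h
    field_simp at this
    linear_combination this
  rcases mul_eq_zero.mp heval with h | h
  · exact h4 h
  rcases mul_eq_zero.mp h with h | h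
  · rcases mul_eq_zero.mp h with h | h
    · exact pow_ne_zero _ ht0 h
    · exact hF0 h
  · rcases mul_eq_zero.mp h with h | h
    · exact pow_ne_zero _ ht1 h
    · exact hF1 h

end GC

/-- For generic parameters `a ∈ ℂ^n` (on a nonempty Zariski-open subset, i.e. the
complement of the zero set of some nonzero polynomial), the normalized system
`a_k = e_k(w) + e_k(1/w)`, `k = 1,...,n`, has exactly `2·n!` solutions in `(ℂ*)^n`. -/
theorem generic_count (n : ℕ) (hn : 0 < n) :
    ∃ p : MvPolynomial (Fin n) ℂ, p ≠ 0 ∧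
      ∀ a : Fin n → ℂ, MvPolynomial.eval a p ≠ 0 →
        {w : Fin n → ℂ | (∀ i, w i ≠ 0) ∧
            ∀ k : Fin n,
              a k = esymm n (k.1 + 1) w + esymm n (k.1 + 1) (fun i => (w i)⁻¹)}.ncard
          = 2 * Nat.factorial n := by
  classical
  refine ⟨GC.pGen n, GC.pGen_ne_zero n hn, ?_⟩
  intro a hpa
  rw [GC.eval_pGen] at hpa
  have h4 : GC.aIdx n a n ^ 2 - 4 ≠ 0 := fun h => hpa (by rw [h, zero_mul])
  have hsec : MvPolynomial.eval a
      (GC.alphaP n ^ 2 + GC.AIdx n n * GC.alphaP n * GC.betaP n + GC.betaP n ^ 2) ≠ 0 :=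
    fun h => hpa (by rw [h, mul_zero])
  obtain ⟨δ, hδ⟩ := IsAlgClosed.exists_pow_nat_eq (GC.aIdx n a n ^ 2 - 4) two_pos
  have hδ0 : δ ≠ 0 := by
    intro h
    apply h4
    rw [← hδ, h]
    ring
  set A := GC.aIdx n a n with hA
  set t1 : ℂ := (A + δ) / 2 with ht1def
  set t2 : ℂ := (A - δ) / 2 with ht2def
  have hsum : t1 + t2 = A := by rw [ht1def, ht2def]; ring
  have hpro : t1 * t2 = 1 := by
    rw [ht1def, ht2def]
    linear_combination (-(1 : ℂ)/4) * hδ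
  have hne12 : t1 ≠ t2 := by
    intro h
    apply hδ0
    have h2 : t1 - t2 = δ := by rw [ht1def, ht2def]; ring
    rw [h, sub_self] at h2
    exact h2.symm
  have hq1 : t1 ^ 2 - A * t1 + 1 = 0 := by linear_combination t1 * hsum - hpro
  have hq2 : t2 ^ 2 - A * t2 + 1 = 0 := by linear_combination t2 * hsum - hpro
  have hts : ∀ t : ℂ, t ^ 2 - A * t + 1 = 0 → t ^ 2 ≠ 1 := by
    intro t hq h1
    have hfac : (t - 1) * (t + 1) = 0 := by linear_combination h1
    rcases mul_eq_zero.mp hfac with h | h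
    · have ht : t = 1 := by linear_combination h
      rw [ht] at hq
      exact h4 (by linear_combination (-(A : ℂ) - 2) * hq)
    · have ht : t = -1 := by linear_combination h
      rw [ht] at hq
      exact h4 (by linear_combination ((A : ℂ) - 2) * hq)
  have htm1 : t1 ^ 2 - 1 ≠ 0 := sub_ne_zero_of_ne (hts t1 hq1)
  have htm2 : t2 ^ 2 - 1 ≠ 0 := sub_ne_zero_of_ne (hts t2 hq2)
  have hGG := GC.norm_eval n a t1 t2 hsum hpro
  rw [hGG] at hsec
  have hG1 : Polynomial.eval₂ (MvPolynomial.eval a) t1 (GC.Gpoly n) ≠ 0 :=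
    fun h => hsec (by rw [h, zero_mul])
  have hG2 : Polynomial.eval₂ (MvPolynomial.eval a) t2 (GC.Gpoly n) ≠ 0 :=
    fun h => hsec (by rw [h, mul_zero])
  rw [GC.Gpoly_eval n a t1 htm1] at hG1
  rw [GC.Gpoly_eval n a t2 htm2] at hG2
  have hF1 : MvPolynomial.eval (GC.cC n a t1) (GC.Fp n) ≠ 0 :=
    fun h => hG1 (by rw [h, mul_zero])
  have hF2 : MvPolynomial.eval (GC.cC n a t2) (GC.Fp n) ≠ 0 :=
    fun h => hG2 (by rw [h, mul_zero])
  -- root tuples for the two branches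
  have hfib : ∀ t : ℂ, MvPolynomial.eval (GC.cC n a t) (GC.Fp n) ≠ 0 →
      ∃ r : Fin n → ℂ, Function.Injective r ∧
        {w : Fin n → ℂ | ∀ k : Fin n, esymm n (k.1 + 1) w = GC.cC n a t k}
          = Set.range (fun σ : Equiv.Perm (Fin n) => r ∘ σ) := by
    intro t hF
    obtain ⟨r, hr⟩ := GC.exists_root_tuple n hn (GC.cC n a t)
    have hesy : ∀ k : Fin n, esymm n (k.1 + 1) r = GC.cC n a t k :=
      fun k => GC.esymm_root_tuple n hn (GC.cC n a t) r hr k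
    have hrinj : Function.Injective r := by
      apply GC.injective_of_eval_Fp_ne_zero n r
      have : (fun k : Fin n => esymm n (k.1 + 1) r) = GC.cC n a t := funext hesy
      rw [this]
      exact hF
    exact GC.fiber_eq n hn (GC.cC n a t) ⟨r, hrinj, hesy⟩
  obtain ⟨r1, hr1inj, hT1⟩ := hfib t1 hF1
  obtain ⟨r2, hr2inj, hT2⟩ := hfib t2 hF2
  set T1 := {w : Fin n → ℂ | ∀ k : Fin n, esymm n (k.1 + 1) w = GC.cC n a t1 k} with hT1def
  set T2 := {w : Fin n → ℂ | ∀ k : Fin n, esymm n (k.1 + 1) w = GC.cC n a t2 k} with hT2def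
  have h1n : n - 1 < n := by omega
  have hcond : (⟨n - 1, h1n⟩ : Fin n).1 + 1 = n := by
    have : (⟨n - 1, h1n⟩ : Fin n).1 = n - 1 := rfl
    omega
  -- the solution set splits
  have hS : {w : Fin n → ℂ | (∀ i, w i ≠ 0) ∧
      ∀ k : Fin n,
        a k = esymm n (k.1 + 1) w + esymm n (k.1 + 1) (fun i => (w i)⁻¹)}
      = T1 ∪ T2 := by
    ext w
    constructor
    · rintro ⟨hwne, hsys⟩
      set E := esymm n n w with hE
      have hprod : ∏ i, w i = E := (GC.esymm_top n w).symm
      have hE0 : E ≠ 0 := by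
        rw [← hprod]
        exact Finset.prod_ne_zero_iff.mpr fun i _ => hwne i
      have hinv : esymm n n (fun i => (w i)⁻¹) = E⁻¹ := by
        rw [GC.esymm_top, ← hprod]
        exact Finset.prod_inv_distrib (f := w)
      have hAa : A = a ⟨n - 1, h1n⟩ := by
        rw [hA, GC.aIdx, dif_pos h1n]
      have h1 := hsys ⟨n - 1, h1n⟩
      rw [hcond] at h1
      rw [hinv, ← hE] at h1
      have hEq : E ^ 2 - A * E + 1 = 0 := by
        rw [hAa, h1]
        field_simp
        ring
      have hfac : (E - t1) * (E - t2) = 0 := by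
        linear_combination hEq - E * hsum + hpro
      have hks := GC.key_solve n a w hwne hsys
      rcases mul_eq_zero.mp hfac with h | h
      · have hEt : E = t1 := sub_eq_zero.mp h
        left
        intro k
        have := hks (by rw [← hE, hEt]; exact hts t1 hq1) k
        rwa [← hE, hEt] at this
      · have hEt : E = t2 := sub_eq_zero.mp h
        right
        intro k
        have := hks (by rw [← hE, hEt]; exact hts t2 hq2) k
        rwa [← hE, hEt] at this
    · rintro (hw | hw)
      · exact GC.key_back n hn a t1 hq1 (hts t1 hq1) w hw
      · exact GC.key_back n hn a t2 hq2 (hts t2 hq2) w hw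
  have hdisj : Disjoint T1 T2 := by
    rw [Set.disjoint_left]
    intro w h1 h2
    apply hne12
    have e1 := h1 ⟨n - 1, h1n⟩
    have e2 := h2 ⟨n - 1, h1n⟩
    rw [GC.cC, if_pos hcond] at e1 e2
    rw [← e1, ← e2]
  have hfin1 : T1.Finite := by rw [hT1]; exact Set.finite_range _
  have hfin2 : T2.Finite := by rw [hT2]; exact Set.finite_range _
  rw [hS, Set.ncard_union_eq hdisj hfin1 hfin2, hT1, hT2,
    GC.ncard_fiber n r1 hr1inj, GC.ncard_fiber n r2 hr2inj]
  omega
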